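/- Let g be a doubling weight function and let λ : ℤ → ℝ satisfy λ_{−j} = λ_j and ∑_{j∈ℤ} λ_j² < ∞. Then for every harmonic function u on the unit disk with Fourier coefficients (a_j) satisfying |u(z)| ≤ K·g(1/(1−|z|)) on the disk, the series ∑_{j∈ℤ} λ_j a_j r^{|j|} e^{ijθ} converges on the unit disk and defines a harmonic function v with |v(z)| ≤ K'·g(1/(1−|z|)) on the disk for some constant K'. -/

import Mathlib

set_option maxHeartbeats 1000000


/-- A doubling weight function with doubling constant `D`: a positive, increasing,
continuous function on `[1,∞)` with `g(1) = 1`, `g(x) → ∞`, and `g(2x) ≤ D·g(x)`. -/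
def IsDoublingWeight (g : ℝ → ℝ) (D : ℝ) : Prop :=
  ContinuousOn g (Set.Ici 1) ∧ MonotoneOn g (Set.Ici 1) ∧
  (∀ x : ℝ, 1 ≤ x → 0 < g x) ∧ g 1 = 1 ∧
  Filter.Tendsto g Filter.atTop Filter.atTop ∧
  (∀ x : ℝ, 1 ≤ x → g (2 * x) ≤ D * g x)

/-- `u` is the harmonic function on the unit disk whose Fourier coefficients are `a`,
i.e. `u(r e^{iθ}) = ∑_{j ∈ ℤ} a_j r^{|j|} e^{ijθ}` with `a_{-j} = conj (a_j)`. -/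
def HasFourierExpansion (u : ℂ → ℝ) (a : ℤ → ℂ) : Prop :=
  (∀ j : ℤ, a (-j) = starRingEnd ℂ (a j)) ∧
  ∀ r θ : ℝ, 0 ≤ r → r < 1 →
    HasSum (fun j : ℤ => a j * (r : ℂ) ^ j.natAbs * Complex.exp (Complex.I * (j : ℂ) * (θ : ℂ)))
      ((u ((r : ℂ) * Complex.exp (Complex.I * (θ : ℂ))) : ℂ))

open MeasureTheory Complex Real AddCircle

local notation "T2" => (2 * Real.pi)

instance fact_two_pi_pos : Fact ((0 : ℝ) < 2 * Real.pi) := ⟨Real.two_pi_pos⟩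

/-- `fourier` on the circle of circumference `2π` is `exp (i n θ)`. -/
lemma fourier_two_pi (n : ℤ) (θ : ℝ) :
    fourier (T := T2) n (θ : AddCircle T2) = Complex.exp (Complex.I * (n : ℂ) * (θ : ℂ)) := by
  rw [fourier_coe_apply]
  congr 1
  have hπ : (Real.pi : ℂ) ≠ 0 := Complex.ofReal_ne_zero.2 Real.pi_ne_zero
  push_cast
  field_simp

/-- Bessel's inequality for absolutely convergent trigonometric series bounded by `B`. -/
lemma bessel_bound (c : ℤ → ℂ) (hc : Summable fun j => ‖c j‖) (B : ℝ) (hB0 : 0 ≤ B)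
    (hB : ∀ θ : ℝ, ‖∑' j : ℤ, c j * Complex.exp (Complex.I * (j : ℂ) * (θ : ℂ))‖ ≤ B) :
    (Summable fun j : ℤ => ‖c j‖ ^ 2) ∧ ∑' j : ℤ, ‖c j‖ ^ 2 ≤ B ^ 2 := by
  -- the sum as a continuous map on the circle
  have hnorm : ∀ j : ℤ, ‖c j • fourier (T := T2) j‖ = ‖c j‖ := by
    intro j
    rw [norm_smul]
    have h1 : ‖fourier (T := T2) j‖ = 1 := by
      apply le_antisymm
      · rw [ContinuousMap.norm_le _ zero_le_one]
        intro x
        induction x using QuotientAddGroup.induction_on with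
        | H θ =>
          rw [fourier_two_pi]
          simp [Complex.norm_exp]
      · have := (fourier (T := T2) j).norm_coe_le_norm (0 : AddCircle T2)
        rwa [fourier_eval_zero, norm_one] at this
    rw [h1, mul_one]
  have hsum : Summable fun j : ℤ => c j • fourier (T := T2) j := by
    apply Summable.of_norm
    simpa only [hnorm] using hc
  set F : C(AddCircle T2, ℂ) := ∑' j : ℤ, c j • fourier (T := T2) j with hFdef
  have hF : HasSum (fun j : ℤ => c j • fourier (T := T2) j) F := hsum.hasSum
  -- pointwise values
  have hFx : ∀ θ : ℝ, HasSum (fun j : ℤ => c j * Complex.exp (Complex.I * (j : ℂ) * (θ : ℂ)))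
      (F (θ : AddCircle T2)) := by
    intro θ
    have h := (ContinuousMap.evalCLM ℂ ((θ : AddCircle T2))).hasSum hF
    have e1 : (fun j : ℤ => (ContinuousMap.evalCLM ℂ ((θ : AddCircle T2)))
        (c j • fourier (T := T2) j))
        = fun j : ℤ => c j * Complex.exp (Complex.I * (j : ℂ) * (θ : ℂ)) := by
      funext j
      show (c j • fourier (T := T2) j) ((θ : AddCircle T2)) = _
      rw [ContinuousMap.smul_apply, smul_eq_mul, fourier_two_pi]
    have e2 : (ContinuousMap.evalCLM ℂ ((θ : AddCircle T2))) F
        = F ((θ : AddCircle T2)) := rfl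
    rw [e1, e2] at h
    exact h
  -- sup-norm bound
  have hFle : ‖F‖ ≤ B := by
    rw [ContinuousMap.norm_le _ hB0]
    intro x
    induction x using QuotientAddGroup.induction_on with
    | H θ =>
      have := hB θ
      rwa [(hFx θ).tsum_eq] at this
  -- pass to L²
  set L : C(AddCircle T2, ℂ) →L[ℂ] Lp ℂ 2 (haarAddCircle (T := T2)) :=
    ContinuousMap.toLp (E := ℂ) 2 (haarAddCircle (T := T2)) ℂ with hLdef
  have hLp : HasSum (fun j : ℤ => c j • fourierLp (T := T2) 2 j) (L F) := by
    have h := L.hasSum hF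
    simpa only [_root_.map_smul] using h
  have horth := orthonormal_fourier (T := T2)
  have hcoef : ∀ n : ℤ, @inner ℂ _ _ (fourierLp (T := T2) 2 n) (L F) = c n := by
    intro n
    have h1 := (innerSL ℂ (fourierLp (T := T2) 2 n)).hasSum hLp
    have h2 : ∀ j : ℤ, @inner ℂ _ _ (fourierLp (T := T2) 2 n) (c j • fourierLp (T := T2) 2 j)
        = if j = n then c n else 0 := by
      intro j
      rw [inner_smul_right]
      rw [orthonormal_iff_ite.mp horth n j]
      by_cases h : j = n
      · subst h; simp
      · simp [h, Ne.symm h]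
    simp only [innerSL_apply_apply] at h1
    simp only [h2] at h1
    exact h1.unique (hasSum_ite_eq n (c n))
  have hLF : ‖L F‖ ≤ B := by
    have h1 := L.le_opNorm F
    have h2 := ContinuousMap.toLp_norm_le (E := ℂ) (μ := haarAddCircle (T := T2)) (𝕜 := ℂ)
      (p := 2)
    have h3 : measureUnivNNReal (haarAddCircle (T := T2)) = 1 := by
      simp [measureUnivNNReal, measure_univ]
    rw [h3] at h2
    simp only [NNReal.one_rpow, NNReal.coe_one] at h2
    have h2' : ‖L‖ ≤ 1 := by
      refine h2.trans ?_
      simp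
    calc ‖L F‖ ≤ ‖L‖ * ‖F‖ := h1
      _ ≤ 1 * ‖F‖ := by
          exact mul_le_mul_of_nonneg_right h2' (norm_nonneg _)
      _ = ‖F‖ := one_mul _
      _ ≤ B := hFle
  constructor
  · have h := horth.inner_products_summable (x := L F)
    simpa only [hcoef] using h
  · have h := horth.tsum_inner_products_le (x := L F)
    simp only [hcoef] at h
    calc ∑' j : ℤ, ‖c j‖ ^ 2 ≤ ‖L F‖ ^ 2 := h
      _ ≤ B ^ 2 := by
          exact pow_le_pow_left₀ (norm_nonneg _) hLF 2

/-- Cauchy–Schwarz for infinite sums of nonnegative reals. -/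
lemma cs_tsum {lam : ℤ → ℝ} (hl2 : Summable fun j : ℤ => (lam j) ^ 2)
    {d : ℤ → ℝ} (hd0 : ∀ j, 0 ≤ d j) (hd2 : Summable fun j : ℤ => d j ^ 2)
    {B : ℝ} (hB0 : 0 ≤ B) (hdB : ∑' j : ℤ, d j ^ 2 ≤ B ^ 2) :
    (Summable fun j : ℤ => |lam j| * d j) ∧
      ∑' j : ℤ, |lam j| * d j ≤ Real.sqrt (∑' j : ℤ, (lam j) ^ 2) * B := by
  set A := ∑' j : ℤ, (lam j) ^ 2 with hA
  have hA0 : 0 ≤ A := tsum_nonneg fun j => sq_nonneg _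
  have key : ∀ s : Finset ℤ, ∑ j ∈ s, |lam j| * d j ≤ Real.sqrt A * B := by
    intro s
    have h1 : (∑ j ∈ s, |lam j| * d j) ^ 2 ≤
        (∑ j ∈ s, |lam j| ^ 2) * (∑ j ∈ s, d j ^ 2) :=
      Finset.sum_mul_sq_le_sq_mul_sq s _ _
    have h2 : ∑ j ∈ s, |lam j| ^ 2 ≤ A := by
      have : (fun j : ℤ => |lam j| ^ 2) = fun j : ℤ => (lam j) ^ 2 := by
        funext j; rw [_root_.sq_abs]
      rw [this]
      exact Summable.sum_le_tsum s (fun j _ => sq_nonneg _) hl2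
    have h3 : ∑ j ∈ s, d j ^ 2 ≤ B ^ 2 :=
      le_trans (Summable.sum_le_tsum s (fun j _ => sq_nonneg _) hd2) hdB
    have h4 : (∑ j ∈ s, |lam j| * d j) ^ 2 ≤ A * B ^ 2 := by
      refine le_trans h1 (mul_le_mul h2 h3 ?_ hA0)
      exact Finset.sum_nonneg fun j _ => sq_nonneg _
    have h5 := Real.sqrt_le_sqrt h4
    rwa [Real.sqrt_sq (Finset.sum_nonneg fun j _ =>
        mul_nonneg (abs_nonneg _) (hd0 j)), Real.sqrt_mul hA0, Real.sqrt_sq hB0] at h5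
  have hsum : Summable fun j : ℤ => |lam j| * d j :=
    summable_of_sum_le (fun j => mul_nonneg (abs_nonneg _) (hd0 j)) key
  exact ⟨hsum, Summable.tsum_le_of_sum_le hsum key⟩

/-- Every symmetric `ℓ²` sequence is a coefficient multiplier of the
growth space `h_g^∞` into itself. -/
theorem l2_multiplier (g : ℝ → ℝ) (D : ℝ) (hg : IsDoublingWeight g D)
    (lam : ℤ → ℝ) (hsym : ∀ j : ℤ, lam (-j) = lam j)
    (hl2 : Summable fun j : ℤ => (lam j) ^ 2) :
    ∀ (u : ℂ → ℝ) (a : ℤ → ℂ) (K : ℝ), HasFourierExpansion u a →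
      (∀ z : ℂ, ‖z‖ < 1 → |u z| ≤ K * g (1 / (1 - ‖z‖))) →
      ∃ (v : ℂ → ℝ) (K' : ℝ), HasFourierExpansion v (fun j => (lam j : ℂ) * a j) ∧
        ∀ z : ℂ, ‖z‖ < 1 → |v z| ≤ K' * g (1 / (1 - ‖z‖)) := by
  intro u a K ha hu
  obtain ⟨hconj, hexp⟩ := ha
  set L := Real.sqrt (∑' j : ℤ, (lam j) ^ 2) with hLdef
  -- the multiplied function
  set w : ℤ → ℂ → ℂ := fun j z =>
    if 0 ≤ j then z ^ j.natAbs else (starRingEnd ℂ z) ^ j.natAbs with hwdef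
  set v : ℂ → ℝ := fun z => (∑' j : ℤ, (lam j : ℂ) * a j * w j z).re with hvdef
  have hK0 : 0 ≤ K := by
    have h := hu 0 (by simp)
    have hg1 : g (1 / (1 - ‖(0 : ℂ)‖)) = 1 := by
      simp [hg.2.2.2.1]
    rw [hg1, mul_one] at h
    exact le_trans (abs_nonneg _) h
  -- `w` evaluated at `r e^{iθ}`
  have hw : ∀ (j : ℤ) (r θ : ℝ), 0 ≤ r →
      w j ((r : ℂ) * Complex.exp (Complex.I * (θ : ℂ)))
        = (r : ℂ) ^ j.natAbs * Complex.exp (Complex.I * (j : ℂ) * (θ : ℂ)) := by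
    intro j r θ _
    by_cases hj : 0 ≤ j
    · have h0 : (j.natAbs : ℤ) = j := by omega
      have hj' : ((j.natAbs : ℕ) : ℂ) = (j : ℂ) := by
        rw [← Int.cast_natCast (R := ℂ) (n := j.natAbs), h0]
      simp only [hwdef, if_pos hj]
      rw [mul_pow, ← Complex.exp_nat_mul]
      congr 2
      rw [hj']
      ring
    · have h0 : (j.natAbs : ℤ) = -j := by omega
      have hj' : ((j.natAbs : ℕ) : ℂ) = -(j : ℂ) := by
        rw [← Int.cast_natCast (R := ℂ) (n := j.natAbs), h0]
        push_cast
        ring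
      simp only [hwdef, if_neg hj]
      rw [map_mul, Complex.conj_ofReal, ← Complex.exp_conj]
      rw [mul_pow, ← Complex.exp_nat_mul]
      congr 2
      rw [hj']
      simp only [map_mul, Complex.conj_I, Complex.conj_ofReal]
      ring
  -- the key estimate at radius r
  have key : ∀ (r θ : ℝ), 0 ≤ r → r < 1 →
      HasSum (fun j : ℤ => ((lam j : ℂ) * a j) * (r : ℂ) ^ j.natAbs *
          Complex.exp (Complex.I * (j : ℂ) * (θ : ℂ)))
        ((v ((r : ℂ) * Complex.exp (Complex.I * (θ : ℂ))) : ℂ)) ∧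
      |v ((r : ℂ) * Complex.exp (Complex.I * (θ : ℂ)))| ≤ L * K * g (1 / (1 - r)) := by
    intro r θ hr hr1
    set B := K * g (1 / (1 - r)) with hBdef
    have hone : (1 : ℝ) ≤ 1 / (1 - r) := by
      rw [le_div_iff₀ (by linarith)]
      linarith
    have hB0 : 0 ≤ B := mul_nonneg hK0 (le_of_lt (hg.2.2.1 _ hone))
    set c : ℤ → ℂ := fun j => a j * (r : ℂ) ^ j.natAbs with hcdef
    have hc : Summable fun j : ℤ => ‖c j‖ := by
      have h := (hexp r 0 hr hr1).summable
      have h' : Summable c := by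
        have : (fun j : ℤ => a j * (r : ℂ) ^ j.natAbs *
            Complex.exp (Complex.I * (j : ℂ) * ((0 : ℝ) : ℂ))) = c := by
          funext j
          simp [hcdef]
        rwa [this] at h
      exact (summable_norm_iff.mpr h')
    have hB : ∀ θ' : ℝ, ‖∑' j : ℤ, c j * Complex.exp (Complex.I * (j : ℂ) * (θ' : ℂ))‖ ≤ B := by
      intro θ'
      have h := hexp r θ' hr hr1
      have habs : ‖(r : ℂ) * Complex.exp (Complex.I * (θ' : ℂ))‖ = r := by
        rw [norm_mul, Complex.norm_real, Complex.norm_exp]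
        simp [_root_.abs_of_nonneg hr]
      have hb := hu ((r : ℂ) * Complex.exp (Complex.I * (θ' : ℂ))) (by rw [habs]; exact hr1)
      rw [habs] at hb
      rw [h.tsum_eq]
      rw [Complex.norm_real, Real.norm_eq_abs]
      exact hb
    obtain ⟨hd2sum, hd2le⟩ := bessel_bound c hc B hB0 hB
    have hd0 : ∀ j : ℤ, (0 : ℝ) ≤ ‖c j‖ := fun j => norm_nonneg _
    obtain ⟨hcs_sum, hcs_le⟩ := cs_tsum hl2 hd0 hd2sum hB0 hd2le
    -- the terms of the multiplied series
    set t : ℤ → ℂ := fun j => ((lam j : ℂ) * a j) * (r : ℂ) ^ j.natAbs *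
        Complex.exp (Complex.I * (j : ℂ) * (θ : ℂ)) with htdef
    have htnorm : ∀ j : ℤ, ‖t j‖ = |lam j| * ‖c j‖ := by
      intro j
      simp only [htdef, hcdef]
      rw [norm_mul, norm_mul, norm_mul]
      have h1 : ‖Complex.exp (Complex.I * (j : ℂ) * (θ : ℂ))‖ = 1 := by
        rw [Complex.norm_exp]
        simp
      rw [h1, mul_one, Complex.norm_real, Real.norm_eq_abs, norm_mul]
      ring
    have htsummable : Summable t := by
      apply Summable.of_norm
      simpa only [htnorm] using hcs_sum
    set S := ∑' j : ℤ, t j with hSdef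
    have hS : HasSum t S := htsummable.hasSum
    -- S is real
    have hSreal : ((S.re : ℝ) : ℂ) = S := by
      have hstar : ∀ j : ℤ, star (t (-j)) = t j := by
        intro j
        simp only [htdef, Complex.star_def, map_mul, map_pow, Complex.conj_ofReal,
          hsym, hconj, Complex.conj_conj, Int.natAbs_neg, ← Complex.exp_conj]
        congr 1
        congr 1
        simp only [map_mul, Complex.conj_I, Complex.conj_ofReal, map_intCast]
        push_cast
        ring
      have h1 : HasSum (fun j : ℤ => star (t j)) (star S) := hS.star
      have h2 : HasSum (fun j : ℤ => star (t (-j))) (star S) :=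
        ((Equiv.neg ℤ).hasSum_iff).mpr h1
      have h3 : HasSum t (star S) := (funext hstar : (fun j : ℤ => star (t (-j))) = t) ▸ h2
      have h4 : star S = S := h3.unique hS
      have h5 : (starRingEnd ℂ) S = S := h4
      exact Complex.conj_eq_iff_re.mp h5
    have hv_eq : (v ((r : ℂ) * Complex.exp (Complex.I * (θ : ℂ))) : ℂ) = S := by
      have : ∑' j : ℤ, (lam j : ℂ) * a j *
          w j ((r : ℂ) * Complex.exp (Complex.I * (θ : ℂ))) = S := by
        apply tsum_congr
        intro j
        rw [hw j r θ hr]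
        simp only [htdef]
        ring
      simp only [hvdef]
      rw [this]
      exact hSreal
    constructor
    · rw [hv_eq]; exact hS
    · have h1 : |v ((r : ℂ) * Complex.exp (Complex.I * (θ : ℂ)))| ≤ ‖S‖ := by
        rw [← hv_eq]
        rw [Complex.norm_real, Real.norm_eq_abs]
      have h2 : ‖S‖ ≤ ∑' j : ℤ, ‖t j‖ := norm_tsum_le_tsum_norm (by
        simpa only [htnorm] using hcs_sum)
      have h3 : ∑' j : ℤ, ‖t j‖ ≤ L * B := by
        have : (fun j : ℤ => ‖t j‖) = fun j : ℤ => |lam j| * ‖c j‖ := funext htnorm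
        rw [this]
        exact hcs_le
      calc |v _| ≤ ‖S‖ := h1
        _ ≤ ∑' j : ℤ, ‖t j‖ := h2
        _ ≤ L * B := h3
        _ = L * K * g (1 / (1 - r)) := by rw [hBdef]; ring
  refine ⟨v, L * K, ⟨?_, ?_⟩, ?_⟩
  · intro j
    simp only [hsym, hconj, map_mul]
    rw [Complex.conj_ofReal]
  · intro r θ hr hr1
    exact (key r θ hr hr1).1
  · intro z hz
    set r := ‖z‖ with hrdef
    have hr : 0 ≤ r := norm_nonneg z
    have hz' : (r : ℂ) * Complex.exp (Complex.I * (z.arg : ℂ)) = z := by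
      rw [mul_comm Complex.I]
      exact Complex.norm_mul_exp_arg_mul_I z
    have h := (key r z.arg hr hz).2
    rwa [hz'] at h
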